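/- Let α be a root of a monic irreducible integer polynomial of degree 4, p a prime, R = ℤ + pℤ[α], I = pR + pαR, and M = pℤ[α]. Then N(I)·N(M) = p⁴ < p⁵ = N(IM). -/

import Mathlib

open Polynomial

lemma stmt12aux_mem_closure (α w : ℂ) :
    w ∈ Subring.closure {α} ↔ ∃ q : Polynomial ℤ, Polynomial.aeval α q = w := by
  have h1 : w ∈ Subring.closure {α} ↔ w ∈ Algebra.adjoin ℤ {α} := by
    rw [Algebra.adjoin_int]; rfl
  rw [h1, Algebra.adjoin_singleton_eq_range_aeval ℤ α]
  exact AlgHom.mem_range _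

lemma stmt12aux_closure_mem (α : ℂ) (d0 d1 d2 d3 : ℤ) :
    (d0 : ℂ) + d1 * α + d2 * α ^ 2 + d3 * α ^ 3 ∈ Subring.closure {α} := by
  rw [stmt12aux_mem_closure]
  exact ⟨C d0 + C d1 * X + C d2 * X ^ 2 + C d3 * X ^ 3, by simp⟩

lemma stmt12aux_rep (α : ℂ) (f : Polynomial ℤ) (hmonic : f.Monic) (hdeg : f.natDegree = 4)
    (hroot : Polynomial.aeval α f = 0) (w : ℂ) (hw : w ∈ Subring.closure {α}) :
    ∃ d0 d1 d2 d3 : ℤ, w = (d0 : ℂ) + d1 * α + d2 * α ^ 2 + d3 * α ^ 3 := by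
  rw [stmt12aux_mem_closure] at hw
  obtain ⟨q, hq⟩ := hw
  set r := q %ₘ f with hr
  have hqr : Polynomial.aeval α q = Polynomial.aeval α r := by
    conv_lhs => rw [← Polynomial.modByMonic_add_div q f]
    simp [hroot, hr]
  have hlt : r.natDegree < 4 := by
    have h1 := Polynomial.degree_modByMonic_lt q hmonic
    rw [Polynomial.degree_eq_natDegree hmonic.ne_zero, hdeg] at h1
    by_cases h0 : r = 0
    · rw [h0]; norm_num
    · exact (Polynomial.natDegree_lt_iff_degree_lt h0).mpr h1
  refine ⟨r.coeff 0, r.coeff 1, r.coeff 2, r.coeff 3, ?_⟩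
  rw [← hq, hqr, Polynomial.aeval_eq_sum_range' hlt]
  simp [Finset.sum_range_succ, zsmul_eq_mul]


lemma stmt12aux_unique (α : ℂ) (f : Polynomial ℤ) (hmonic : f.Monic) (hirr : Irreducible f)
    (hdeg : f.natDegree = 4) (hroot : Polynomial.aeval α f = 0)
    (a0 a1 a2 a3 : ℤ) (h : (a0 : ℂ) + a1 * α + a2 * α ^ 2 + a3 * α ^ 3 = 0) :
    a0 = 0 ∧ a1 = 0 ∧ a2 = 0 ∧ a3 = 0 := by
  set fQ : Polynomial ℚ := f.map (algebraMap ℤ ℚ) with hfQ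
  have hfQmonic : fQ.Monic := hmonic.map _
  have hfQroot : Polynomial.aeval α fQ = 0 := by
    rw [hfQ, Polynomial.aeval_map_algebraMap, hroot]
  have hfQirr : Irreducible fQ := by
    rw [← Polynomial.Monic.irreducible_iff_irreducible_map_fraction_map hmonic]
    exact hirr
  have hmin : minpoly ℚ α = fQ :=
    (minpoly.eq_of_irreducible_of_monic hfQirr hfQroot hfQmonic).symm
  have hmindeg : (minpoly ℚ α).natDegree = 4 := by
    rw [hmin, hfQ, Polynomial.natDegree_map_eq_of_injective
      (algebraMap ℤ ℚ).injective_int, hdeg]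
  set g : Polynomial ℚ := C (a0 : ℚ) + C (a1 : ℚ) * X + C (a2 : ℚ) * X ^ 2 + C (a3 : ℚ) * X ^ 3
    with hg
  have hgroot : Polynomial.aeval α g = 0 := by
    rw [hg]
    simp only [map_add, map_mul, map_pow, Polynomial.aeval_C, Polynomial.aeval_X]
    exact_mod_cast h
  have hdvd : minpoly ℚ α ∣ g := minpoly.dvd ℚ α hgroot
  have hg0 : g = 0 := by
    by_contra h0
    have := Polynomial.natDegree_le_of_dvd hdvd h0
    rw [hmindeg] at this
    have hgle : g.natDegree ≤ 3 := by
      rw [hg]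
      compute_degree
    omega
  have hcoeff : ∀ i, g.coeff i = 0 := by rw [hg0]; simp
  have h0 := hcoeff 0
  have h1 := hcoeff 1
  have h2 := hcoeff 2
  have h3 := hcoeff 3
  rw [hg] at h0 h1 h2 h3
  simp only [Polynomial.coeff_add, Polynomial.coeff_C, Polynomial.coeff_C_mul, Polynomial.coeff_X,
    Polynomial.coeff_X_pow] at h0 h1 h2 h3
  norm_num at h0 h1 h2 h3
  exact ⟨by exact_mod_cast h0, by exact_mod_cast h1, by exact_mod_cast h2, by exact_mod_cast h3⟩

lemma stmt12aux_card_quot {G : Type*} [CommRing G] (J : Ideal G) {T : Type*} (g : G → T)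
    (h : ∀ x y : G, g x = g y ↔ x - y ∈ J) (hsur : Function.Surjective g) :
    Nat.card (G ⧸ J) = Nat.card T := by
  apply Nat.card_congr
  refine Equiv.ofBijective (fun q => Quotient.liftOn' q g ?_) ⟨?_, ?_⟩
  · intro x y hxy
    exact (h x y).mpr ((Submodule.quotientRel_def J).mp hxy)
  · intro q q'
    induction q using Quotient.inductionOn' with | h x =>
    induction q' using Quotient.inductionOn' with | h y =>
    intro hxy
    simp only [Quotient.liftOn'_mk''] at hxy
    exact Quotient.sound' ((Submodule.quotientRel_def J).mpr ((h x y).mp hxy))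
  · intro t
    obtain ⟨x, hx⟩ := hsur t
    exact ⟨Quotient.mk'' x, hx⟩

theorem stmt12 (α : ℂ) (f : Polynomial ℤ) (hmonic : f.Monic) (hirr : Irreducible f)
    (hdeg : f.natDegree = 4) (hroot : Polynomial.aeval α f = 0)
    (p : ℕ) (hp : p.Prime)
    (R : Subring ℂ)
    (hR : (R : Set ℂ) = {x | ∃ m : ℤ, ∃ w ∈ Subring.closure {α}, x = m + p * w})
    (a b : ↥R) (ha : (a : ℂ) = p) (hb : (b : ℂ) = p * α)
    (M : Ideal ↥R)
    (hM : ∀ x : ↥R, x ∈ M ↔ ∃ w ∈ Subring.closure {α}, (x : ℂ) = p * w) :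
    Nat.card (↥R ⧸ Ideal.span {a, b}) * Nat.card (↥R ⧸ M) = p ^ 4 ∧
    Nat.card (↥R ⧸ (Ideal.span {a, b} * M)) = p ^ 5 ∧
    (p : ℕ) ^ 4 < p ^ 5 := by
  have hp0 : (p : ℤ) ≠ 0 := by exact_mod_cast hp.ne_zero
  have hα4 : α ^ 4 = -(f.coeff 0 : ℂ) - f.coeff 1 * α - f.coeff 2 * α ^ 2
      - f.coeff 3 * α ^ 3 := by
    have h5 : f.natDegree < 5 := by omega
    have hs := Polynomial.aeval_eq_sum_range' h5 α
    rw [hroot] at hs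
    have hc4 : f.coeff 4 = 1 := by
      have h := hmonic.coeff_natDegree; rwa [hdeg] at h
    simp only [Finset.sum_range_succ, Finset.sum_range_zero, hc4, zsmul_eq_mul] at hs
    push_cast at hs
    linear_combination -hs
  -- coordinates
  have hex : ∀ x : ↥R, ∃ d0 d1 d2 d3 : ℤ,
      (x : ℂ) = d0 + d1 * ((p : ℂ) * α) + d2 * ((p : ℂ) * α ^ 2) + d3 * ((p : ℂ) * α ^ 3) := by
    intro x
    have hx : (x : ℂ) ∈ (R : Set ℂ) := x.2
    rw [hR] at hx
    obtain ⟨m, w, hw, hxw⟩ := hx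
    obtain ⟨d0, d1, d2, d3, hd⟩ := stmt12aux_rep α f hmonic hdeg hroot w hw
    exact ⟨m + p * d0, d1, d2, d3, by rw [hxw, hd]; push_cast; ring⟩
  choose c0 c1 c2 c3 hc using hex
  have huniq : ∀ (x : ↥R) (d0 d1 d2 d3 : ℤ),
      (x : ℂ) = d0 + d1 * ((p : ℂ) * α) + d2 * ((p : ℂ) * α ^ 2) + d3 * ((p : ℂ) * α ^ 3) →
      d0 = c0 x ∧ d1 = c1 x ∧ d2 = c2 x ∧ d3 = c3 x := by
    intro x d0 d1 d2 d3 hd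
    have h0 : ((d0 - c0 x : ℤ) : ℂ) + ((p * (d1 - c1 x) : ℤ) : ℂ) * α
        + ((p * (d2 - c2 x) : ℤ) : ℂ) * α ^ 2 + ((p * (d3 - c3 x) : ℤ) : ℂ) * α ^ 3 = 0 := by
      push_cast
      linear_combination hc x - hd
    obtain ⟨e0, e1, e2, e3⟩ := stmt12aux_unique α f hmonic hirr hdeg hroot _ _ _ _ h0
    have g1 := mul_eq_zero.mp e1
    have g2 := mul_eq_zero.mp e2
    have g3 := mul_eq_zero.mp e3
    have k1 := g1.resolve_left hp0
    have k2 := g2.resolve_left hp0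
    have k3 := g3.resolve_left hp0
    exact ⟨by omega, by omega, by omega, by omega⟩
  have hmemR : ∀ (m : ℤ) (w : ℂ), w ∈ Subring.closure {α} → ((m : ℂ) + (p : ℂ) * w) ∈ R := by
    intro m w hw
    rw [← SetLike.mem_coe, hR]
    exact ⟨m, w, hw, rfl⟩
  have hsub : ∀ x y : ↥R, c0 (x - y) = c0 x - c0 y ∧ c1 (x - y) = c1 x - c1 y ∧
      c2 (x - y) = c2 x - c2 y ∧ c3 (x - y) = c3 x - c3 y := by
    intro x y
    have hxy : ((x - y : ↥R) : ℂ) = ((c0 x - c0 y : ℤ) : ℂ)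
        + ((c1 x - c1 y : ℤ) : ℂ) * ((p : ℂ) * α)
        + ((c2 x - c2 y : ℤ) : ℂ) * ((p : ℂ) * α ^ 2)
        + ((c3 x - c3 y : ℤ) : ℂ) * ((p : ℂ) * α ^ 3) := by
      push_cast
      linear_combination hc x - hc y
    obtain ⟨h0, h1, h2, h3⟩ := huniq _ _ _ _ _ hxy
    exact ⟨h0.symm, h1.symm, h2.symm, h3.symm⟩
  have helt : ∀ z0 z1 z2 z3 : ℤ, ∃ x : ↥R,
      c0 x = z0 ∧ c1 x = z1 ∧ c2 x = z2 ∧ c3 x = z3 := by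
    intro z0 z1 z2 z3
    have hwcl : (z1 : ℂ) * α + z2 * α ^ 2 + z3 * α ^ 3 ∈ Subring.closure {α} := by
      simpa using stmt12aux_closure_mem α 0 z1 z2 z3
    refine ⟨⟨(z0 : ℂ) + (p : ℂ) * ((z1 : ℂ) * α + z2 * α ^ 2 + z3 * α ^ 3),
      hmemR z0 _ hwcl⟩, ?_⟩
    have hval : ((⟨(z0 : ℂ) + (p : ℂ) * ((z1 : ℂ) * α + z2 * α ^ 2 + z3 * α ^ 3),
        hmemR z0 _ hwcl⟩ : ↥R) : ℂ) = (z0 : ℂ) + (z1 : ℂ) * ((p : ℂ) * α)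
        + (z2 : ℂ) * ((p : ℂ) * α ^ 2) + (z3 : ℂ) * ((p : ℂ) * α ^ 3) := by
      push_cast
      ring
    obtain ⟨h0, h1, h2, h3⟩ := huniq _ _ _ _ _ hval
    exact ⟨h0.symm, h1.symm, h2.symm, h3.symm⟩
  -- characterization of M
  have hMc : ∀ x : ↥R, x ∈ M ↔ (p : ℤ) ∣ c0 x := by
    intro x
    rw [hM]
    constructor
    · rintro ⟨w, hw, hxw⟩
      obtain ⟨d0, d1, d2, d3, hd⟩ := stmt12aux_rep α f hmonic hdeg hroot w hw
      have hx : (x : ℂ) = ((p * d0 : ℤ) : ℂ) + (d1 : ℂ) * ((p : ℂ) * α)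
          + (d2 : ℂ) * ((p : ℂ) * α ^ 2) + (d3 : ℂ) * ((p : ℂ) * α ^ 3) := by
        rw [hxw, hd]; push_cast; ring
      obtain ⟨h0, -, -, -⟩ := huniq _ _ _ _ _ hx
      exact ⟨d0, h0.symm⟩
    · rintro ⟨k, hk⟩
      refine ⟨(k : ℂ) + c1 x * α + c2 x * α ^ 2 + c3 x * α ^ 3,
        stmt12aux_closure_mem α k (c1 x) (c2 x) (c3 x), ?_⟩
      rw [hc x, hk]
      push_cast
      ring
  -- characterization of I = span {a, b}
  have hIc : ∀ x : ↥R, x ∈ Ideal.span {a, b} ↔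
      (p : ℤ) ∣ c0 x ∧ (p : ℤ) ∣ c2 x ∧ (p : ℤ) ∣ c3 x := by
    intro x
    rw [Ideal.mem_span_pair]
    constructor
    · rintro ⟨u, v, huv⟩
      have hxuv : (x : ℂ) = (u : ℂ) * (p : ℂ) + (v : ℂ) * ((p : ℂ) * α) := by
        rw [← huv]; push_cast [ha, hb]; ring
      have hx : (x : ℂ) = ((p * c0 u - p ^ 2 * c3 v * f.coeff 0 : ℤ) : ℂ)
          + ((p * c1 u + c0 v - p * c3 v * f.coeff 1 : ℤ) : ℂ) * ((p : ℂ) * α)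
          + ((p * c2 u + p * c1 v - p * c3 v * f.coeff 2 : ℤ) : ℂ) * ((p : ℂ) * α ^ 2)
          + ((p * c3 u + p * c2 v - p * c3 v * f.coeff 3 : ℤ) : ℂ) * ((p : ℂ) * α ^ 3) := by
        rw [hxuv, hc u, hc v]
        push_cast
        linear_combination ((p : ℂ) ^ 2 * (c3 v : ℂ)) * hα4
      obtain ⟨h0, h1, h2, h3⟩ := huniq _ _ _ _ _ hx
      exact ⟨⟨c0 u - p * c3 v * f.coeff 0, by linear_combination -h0⟩,
        ⟨c2 u + c1 v - c3 v * f.coeff 2, by linear_combination -h2⟩,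
        ⟨c3 u + c2 v - c3 v * f.coeff 3, by linear_combination -h3⟩⟩
    · rintro ⟨⟨k0, hk0⟩, ⟨k2, hk2⟩, ⟨k3, hk3⟩⟩
      have hwcl : (k2 : ℂ) * α + k3 * α ^ 2 ∈ Subring.closure {α} := by
        simpa using stmt12aux_closure_mem α 0 k2 k3 0
      refine ⟨(k0 : ↥R), ⟨((c1 x : ℤ) : ℂ) + (p : ℂ) * ((k2 : ℂ) * α + k3 * α ^ 2),
        hmemR (c1 x) _ hwcl⟩, ?_⟩
      apply Subtype.ext
      push_cast [ha, hb]
      rw [hc x, hk0, hk2, hk3]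
      push_cast
      ring
  -- a, b in M and span {a,b} ≤ M
  have haM : a ∈ M := (hM a).mpr ⟨1, Subring.one_mem _, by rw [ha]; ring⟩
  have hbM : b ∈ M := (hM b).mpr ⟨α, Subring.subset_closure rfl, hb⟩
  have hspanM : Ideal.span {a, b} ≤ M := by
    rw [Ideal.span_le]
    rintro z (rfl | hz)
    · exact haM
    · rw [Set.mem_singleton_iff] at hz
      rw [hz]
      exact hbM
  -- characterization of I * M
  have hIM : ∀ x : ↥R, x ∈ Ideal.span {a, b} * M ↔
      ∃ w ∈ Subring.closure {α}, (x : ℂ) = (p : ℂ) ^ 2 * w := by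
    intro x
    constructor
    · intro hx
      refine Submodule.mul_induction_on hx ?_ ?_
      · intro m hm n hn
        obtain ⟨wm, hwm, hm'⟩ := (hM m).mp (hspanM hm)
        obtain ⟨wn, hwn, hn'⟩ := (hM n).mp hn
        exact ⟨wm * wn, Subring.mul_mem _ hwm hwn, by push_cast [hm', hn']; ring⟩
      · rintro y z ⟨wy, hwy, hy⟩ ⟨wz, hwz, hz⟩
        exact ⟨wy + wz, Subring.add_mem _ hwy hwz, by push_cast [hy, hz]; ring⟩
    · rintro ⟨w, hw, hxw⟩
      have hyR : ((p : ℂ) * w) ∈ R := by simpa using hmemR 0 w hw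
      set y : ↥R := ⟨(p : ℂ) * w, hyR⟩ with hy
      have hyM : y ∈ M := (hM y).mpr ⟨w, hw, rfl⟩
      have hay : a * y ∈ Ideal.span {a, b} * M :=
        Ideal.mul_mem_mul (Ideal.subset_span (Set.mem_insert _ _)) hyM
      have hxy : x = a * y := by
        apply Subtype.ext
        push_cast [ha, hy, hxw]
        ring
      rwa [hxy]
  have hIMc : ∀ x : ↥R, x ∈ Ideal.span {a, b} * M ↔
      (p : ℤ) ^ 2 ∣ c0 x ∧ (p : ℤ) ∣ c1 x ∧ (p : ℤ) ∣ c2 x ∧ (p : ℤ) ∣ c3 x := by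
    intro x
    rw [hIM]
    constructor
    · rintro ⟨w, hw, hxw⟩
      obtain ⟨d0, d1, d2, d3, hd⟩ := stmt12aux_rep α f hmonic hdeg hroot w hw
      have hx : (x : ℂ) = ((p ^ 2 * d0 : ℤ) : ℂ) + ((p * d1 : ℤ) : ℂ) * ((p : ℂ) * α)
          + ((p * d2 : ℤ) : ℂ) * ((p : ℂ) * α ^ 2)
          + ((p * d3 : ℤ) : ℂ) * ((p : ℂ) * α ^ 3) := by
        rw [hxw, hd]; push_cast; ring
      obtain ⟨h0, h1, h2, h3⟩ := huniq _ _ _ _ _ hx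
      exact ⟨⟨d0, h0.symm⟩, ⟨d1, h1.symm⟩, ⟨d2, h2.symm⟩, ⟨d3, h3.symm⟩⟩
    · rintro ⟨⟨k0, hk0⟩, ⟨k1, hk1⟩, ⟨k2, hk2⟩, ⟨k3, hk3⟩⟩
      refine ⟨(k0 : ℂ) + k1 * α + k2 * α ^ 2 + k3 * α ^ 3,
        stmt12aux_closure_mem α k0 k1 k2 k3, ?_⟩
      rw [hc x, hk0, hk1, hk2, hk3]
      push_cast
      ring
  -- cast/divisibility helper
  have key : ∀ (n : ℕ) (i j : ℤ), ((i : ZMod n) = (j : ZMod n)) ↔ (n : ℤ) ∣ (i - j) := by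
    intro n i j
    rw [ZMod.intCast_eq_intCast_iff, Int.modEq_iff_dvd, dvd_sub_comm]
  -- cardinalities
  have cardM : Nat.card (↥R ⧸ M) = p := by
    rw [stmt12aux_card_quot M (fun x => ((c0 x : ZMod p)))]
    · exact Nat.card_zmod p
    · intro x y
      rw [key, hMc, (hsub x y).1]
    · intro t
      obtain ⟨z, hz⟩ := ZMod.intCast_surjective t
      obtain ⟨x, hx0, -, -, -⟩ := helt z 0 0 0
      exact ⟨x, by simp only [hx0, hz]⟩
  have cardI : Nat.card (↥R ⧸ Ideal.span {a, b}) = p ^ 3 := by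
    rw [stmt12aux_card_quot (Ideal.span {a, b})
      (fun x => ((c0 x : ZMod p), (c2 x : ZMod p), (c3 x : ZMod p)))]
    · rw [Nat.card_prod, Nat.card_prod, Nat.card_zmod]
      ring
    · intro x y
      obtain ⟨h0, h1, h2, h3⟩ := hsub x y
      rw [Prod.ext_iff, Prod.ext_iff]
      simp only [key]
      rw [hIc, h0, h2, h3]
    · rintro ⟨t0, t2, t3⟩
      obtain ⟨z0, hz0⟩ := ZMod.intCast_surjective t0
      obtain ⟨z2, hz2⟩ := ZMod.intCast_surjective t2
      obtain ⟨z3, hz3⟩ := ZMod.intCast_surjective t3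
      obtain ⟨x, hx0, -, hx2, hx3⟩ := helt z0 0 z2 z3
      exact ⟨x, by simp only [hx0, hx2, hx3, hz0, hz2, hz3]⟩
  have cardIM : Nat.card (↥R ⧸ (Ideal.span {a, b} * M)) = p ^ 5 := by
    rw [stmt12aux_card_quot (Ideal.span {a, b} * M)
      (fun x => ((c0 x : ZMod (p ^ 2)), (c1 x : ZMod p), (c2 x : ZMod p), (c3 x : ZMod p)))]
    · rw [Nat.card_prod, Nat.card_prod, Nat.card_prod, Nat.card_zmod, Nat.card_zmod]
      ring
    · intro x y
      obtain ⟨h0, h1, h2, h3⟩ := hsub x y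
      rw [Prod.ext_iff, Prod.ext_iff, Prod.ext_iff]
      simp only [key]
      rw [hIMc, h0, h1, h2, h3]
      push_cast
      try tauto
    · rintro ⟨t0, t1, t2, t3⟩
      obtain ⟨z0, hz0⟩ := ZMod.intCast_surjective t0
      obtain ⟨z1, hz1⟩ := ZMod.intCast_surjective t1
      obtain ⟨z2, hz2⟩ := ZMod.intCast_surjective t2
      obtain ⟨z3, hz3⟩ := ZMod.intCast_surjective t3
      obtain ⟨x, hx0, hx1, hx2, hx3⟩ := helt z0 z1 z2 z3
      exact ⟨x, by simp only [hx0, hx1, hx2, hx3, hz0, hz1, hz2, hz3]⟩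
  refine ⟨?_, cardIM, ?_⟩
  · rw [cardI, cardM]
    ring
  · exact Nat.pow_lt_pow_right hp.one_lt (by omega)
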